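/- Let Σ, Σ̂ be symmetric positive semidefinite d×d matrices. The Bures constraint B(Σ, Σ̂) ≤ θ, i.e., Tr(Σ + Σ̂ - 2(Σ̂^{1/2} Σ Σ̂^{1/2})^{1/2}) ≤ θ², holds if and only if there exists Z ∈ ℝ^{d×d} such that the block matrix [[Σ̂, Z], [Zᵀ, Σ]] is positive semidefinite and Tr(Σ + Σ̂ - 2Z) ≤ θ². -/

import Mathlib

open Matrix

open scoped ComplexOrder in
/-- The positive semidefinite square root of a positive semidefinite matrix
(the definition Mathlib had, since removed). -/
noncomputable def Matrix.PosSemidef.sqrt {n 𝕜 : Type*} [Fintype n] [RCLike 𝕜] [DecidableEq n]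
    {A : Matrix n n 𝕜} (hA : A.PosSemidef) : Matrix n n 𝕜 :=
  hA.1.eigenvectorUnitary.1 * diagonal ((↑) ∘ (√·) ∘ hA.1.eigenvalues) *
    (star hA.1.eigenvectorUnitary : Matrix n n 𝕜)

namespace BuresAux

variable {m n p : Type*} [Fintype m] [Fintype n] [Fintype p]

lemma dot_self_nonneg (x : n → ℝ) : 0 ≤ x ⬝ᵥ x :=
  Finset.sum_nonneg fun _ _ => mul_self_nonneg _

lemma dot_CS (x y : n → ℝ) : x ⬝ᵥ y ≤ Real.sqrt (x ⬝ᵥ x) * Real.sqrt (y ⬝ᵥ y) := by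
  have h := Finset.sum_mul_sq_le_sq_mul_sq Finset.univ x y
  have hx : (0:ℝ) ≤ x ⬝ᵥ x := dot_self_nonneg x
  have hxx : ∑ i, x i ^ 2 = x ⬝ᵥ x := by simp [dotProduct, sq]
  have hyy : ∑ i, y i ^ 2 = y ⬝ᵥ y := by simp [dotProduct, sq]
  have hxy : x ⬝ᵥ y ≤ |x ⬝ᵥ y| := le_abs_self _
  refine hxy.trans ?_
  rw [← Real.sqrt_mul_self (abs_nonneg (x ⬝ᵥ y)), ← Real.sqrt_mul hx]
  apply Real.sqrt_le_sqrt
  calc |x ⬝ᵥ y| * |x ⬝ᵥ y| = (x ⬝ᵥ y)^2 := by rw [← abs_mul, ← sq, abs_sq]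
  _ ≤ (∑ i, x i ^ 2) * (∑ i, y i ^ 2) := h
  _ = (x ⬝ᵥ x) * (y ⬝ᵥ y) := by rw [hxx, hyy]

lemma mulVec_dot (F : Matrix m n ℝ) (x : n → ℝ) (y : m → ℝ) :
    (F *ᵥ x) ⬝ᵥ y = x ⬝ᵥ (Fᵀ *ᵥ y) := by
  rw [dotProduct_mulVec, vecMul_transpose]

/-- `F` is a (Euclidean) contraction. -/
def Con (F : Matrix m n ℝ) : Prop :=
  ∀ x : n → ℝ, (F *ᵥ x) ⬝ᵥ (F *ᵥ x) ≤ x ⬝ᵥ x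

lemma Con.transpose {F : Matrix m n ℝ} (hF : Con F) : Con Fᵀ := by
  intro y
  set z := Fᵀ *ᵥ y with hz
  have h1 : z ⬝ᵥ z = y ⬝ᵥ (F *ᵥ z) := by
    have h := mulVec_dot Fᵀ y z
    rw [transpose_transpose] at h
    rw [hz, h]
  have h2 : y ⬝ᵥ (F *ᵥ z) ≤ Real.sqrt (y ⬝ᵥ y) * Real.sqrt ((F *ᵥ z) ⬝ᵥ (F *ᵥ z)) := dot_CS _ _
  have h3 : Real.sqrt ((F *ᵥ z) ⬝ᵥ (F *ᵥ z)) ≤ Real.sqrt (z ⬝ᵥ z) := Real.sqrt_le_sqrt (hF z)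
  have hzz : z ⬝ᵥ z ≤ Real.sqrt (y ⬝ᵥ y) * Real.sqrt (z ⬝ᵥ z) := by
    calc z ⬝ᵥ z = y ⬝ᵥ (F *ᵥ z) := h1
    _ ≤ Real.sqrt (y ⬝ᵥ y) * Real.sqrt ((F *ᵥ z) ⬝ᵥ (F *ᵥ z)) := h2
    _ ≤ Real.sqrt (y ⬝ᵥ y) * Real.sqrt (z ⬝ᵥ z) :=
        mul_le_mul_of_nonneg_left h3 (Real.sqrt_nonneg _)
  have hs : Real.sqrt (z ⬝ᵥ z) ^ 2 = z ⬝ᵥ z := Real.sq_sqrt (dot_self_nonneg z)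
  have ht : Real.sqrt (y ⬝ᵥ y) ^ 2 = y ⬝ᵥ y := Real.sq_sqrt (dot_self_nonneg y)
  nlinarith [Real.sqrt_nonneg (z ⬝ᵥ z), Real.sqrt_nonneg (y ⬝ᵥ y)]

lemma Con.comp {F : Matrix m n ℝ} {G : Matrix n p ℝ} (hF : Con F) (hG : Con G) :
    Con (F * G) := by
  intro x
  rw [← mulVec_mulVec]
  exact (hF _).trans (hG x)

lemma posSemidef_dot {Q : Matrix n n ℝ} (hQ : Q.PosSemidef) (x : n → ℝ) :
    0 ≤ x ⬝ᵥ (Q *ᵥ x) := by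
  have := hQ.dotProduct_mulVec_nonneg x
  simpa using this

lemma con_of_one_sub_psd {F : Matrix m n ℝ} [DecidableEq n]
    (h : ((1 : Matrix n n ℝ) - Fᵀ * F).PosSemidef) : Con F := by
  intro x
  have h0 := posSemidef_dot h x
  have h1 : x ⬝ᵥ (((1 : Matrix n n ℝ) - Fᵀ * F) *ᵥ x) = x ⬝ᵥ x - (F *ᵥ x) ⬝ᵥ (F *ᵥ x) := by
    rw [sub_mulVec, dotProduct_sub, one_mulVec, ← mulVec_mulVec, ← mulVec_dot, dotProduct_comm]
  rw [h1] at h0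
  linarith

section spectral

variable {n : Type*} [Fintype n] [DecidableEq n] {Q : Matrix n n ℝ} (hQ : Q.PosSemidef)

/-- Eigenvector (orthogonal) matrix of a real PSD matrix. -/
noncomputable def evU : Matrix n n ℝ := hQ.1.eigenvectorUnitary

lemma evU_t_mul : (evU hQ)ᵀ * evU hQ = 1 := by
  have h : star (hQ.1.eigenvectorUnitary : Matrix n n ℝ) * hQ.1.eigenvectorUnitary = 1 :=
    Unitary.coe_star_mul_self _
  rwa [star_eq_conjTranspose, conjTranspose_eq_transpose_of_trivial] at h

lemma evU_mul_t : evU hQ * (evU hQ)ᵀ = 1 := by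
  have h : (hQ.1.eigenvectorUnitary : Matrix n n ℝ) *
      star (hQ.1.eigenvectorUnitary : Matrix n n ℝ) = 1 :=
    Unitary.coe_mul_star_self _
  rwa [star_eq_conjTranspose, conjTranspose_eq_transpose_of_trivial] at h

lemma spectral : Q = evU hQ * diagonal hQ.1.eigenvalues * (evU hQ)ᵀ := by
  have h := hQ.1.spectral_theorem
  rwa [Unitary.conjStarAlgAut_apply, star_eq_conjTranspose, conjTranspose_eq_transpose_of_trivial,
    RCLike.ofReal_real_eq_id, Function.id_comp] at h

lemma sqrt_eq :
    hQ.sqrt = evU hQ * diagonal (fun i => Real.sqrt (hQ.1.eigenvalues i)) * (evU hQ)ᵀ := by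
  rw [Matrix.PosSemidef.sqrt, star_eq_conjTranspose, conjTranspose_eq_transpose_of_trivial]
  congr 1

lemma conj_diag_mul (f g : n → ℝ) :
    (evU hQ * diagonal f * (evU hQ)ᵀ) * (evU hQ * diagonal g * (evU hQ)ᵀ) =
      evU hQ * diagonal (fun i => f i * g i) * (evU hQ)ᵀ := by
  have h : diagonal f * ((evU hQ)ᵀ * evU hQ) * diagonal g = diagonal (fun i => f i * g i) := by
    rw [evU_t_mul, mul_one, diagonal_mul_diagonal]
  calc (evU hQ * diagonal f * (evU hQ)ᵀ) * (evU hQ * diagonal g * (evU hQ)ᵀ)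
      = evU hQ * (diagonal f * ((evU hQ)ᵀ * evU hQ) * diagonal g) * (evU hQ)ᵀ := by
        simp only [mul_assoc]
    _ = evU hQ * diagonal (fun i => f i * g i) * (evU hQ)ᵀ := by rw [h]

lemma conj_diag_trace (f : n → ℝ) :
    (evU hQ * diagonal f * (evU hQ)ᵀ).trace = ∑ i, f i := by
  rw [trace_mul_cycle, evU_t_mul, one_mul, trace_diagonal]

lemma conj_diag_transpose (f : n → ℝ) :
    (evU hQ * diagonal f * (evU hQ)ᵀ)ᵀ = evU hQ * diagonal f * (evU hQ)ᵀ := by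
  rw [transpose_mul, transpose_mul, transpose_transpose, diagonal_transpose, mul_assoc]

lemma conj_diag_psd (f : n → ℝ) (hf : ∀ i, 0 ≤ f i) :
    (evU hQ * diagonal f * (evU hQ)ᵀ).PosSemidef := by
  have h1 : (diagonal f).PosSemidef := posSemidef_diagonal_iff.mpr hf
  have h2 := h1.mul_mul_conjTranspose_same (evU hQ)
  rwa [conjTranspose_eq_transpose_of_trivial] at h2

lemma one_eq : (1 : Matrix n n ℝ) = evU hQ * diagonal (fun _ => (1:ℝ)) * (evU hQ)ᵀ := by
  rw [diagonal_one, mul_one, evU_mul_t]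

lemma conj_diag_sub (f g : n → ℝ) :
    (evU hQ * diagonal f * (evU hQ)ᵀ) - (evU hQ * diagonal g * (evU hQ)ᵀ) =
      evU hQ * diagonal (fun i => f i - g i) * (evU hQ)ᵀ := by
  rw [← sub_mul, ← mul_sub, ← diagonal_sub]

lemma trace_sqrt : hQ.sqrt.trace = ∑ i, Real.sqrt (hQ.1.eigenvalues i) := by
  rw [sqrt_eq, conj_diag_trace]

lemma conj_rev : (evU hQ)ᵀ * Q * evU hQ = diagonal hQ.1.eigenvalues := by
  have h := hQ.1.conjStarAlgAut_star_eigenvectorUnitary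
  rwa [Unitary.conjStarAlgAut_apply, Unitary.coe_star, star_star, star_eq_conjTranspose, conjTranspose_eq_transpose_of_trivial,
    RCLike.ofReal_real_eq_id, Function.id_comp] at h

end spectral

lemma _root_.Matrix.PosSemidef.posSemidef_sqrt {n : Type*} [Fintype n] [DecidableEq n]
    {Q : Matrix n n ℝ} (hQ : Q.PosSemidef) : hQ.sqrt.PosSemidef := by
  rw [sqrt_eq]
  exact conj_diag_psd hQ _ (fun i => Real.sqrt_nonneg _)

lemma _root_.Matrix.PosSemidef.sqrt_mul_self {n : Type*} [Fintype n] [DecidableEq n]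
    {Q : Matrix n n ℝ} (hQ : Q.PosSemidef) : hQ.sqrt * hQ.sqrt = Q := by
  rw [sqrt_eq, conj_diag_mul]
  conv_rhs => rw [spectral hQ]
  congr 3
  funext i
  exact Real.mul_self_sqrt (hQ.eigenvalues_nonneg i)

lemma inv_sqrt_mul_self {t : ℝ} (ht : 0 ≤ t) : (Real.sqrt t)⁻¹ * t = Real.sqrt t := by
  rcases eq_or_lt_of_le ht with h | h
  · simp [← h]
  · have hs : 0 < Real.sqrt t := Real.sqrt_pos.mpr h
    field_simp
    rw [Real.sq_sqrt ht]

lemma sandwich_le_one {t : ℝ} (ht : 0 ≤ t) :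
    (Real.sqrt t)⁻¹ * t * (Real.sqrt t)⁻¹ ≤ 1 := by
  rcases eq_or_lt_of_le ht with h | h
  · simp [← h]
  · have hs : 0 < Real.sqrt t := Real.sqrt_pos.mpr h
    have hmul : Real.sqrt t * Real.sqrt t = t := Real.mul_self_sqrt ht
    have : (Real.sqrt t)⁻¹ * t * (Real.sqrt t)⁻¹ = 1 := by
      field_simp
      rw [Real.sq_sqrt ht]
    rw [this]

/-- Key inequality: if `Kᵀ` is a contraction and `X * Xᵀ = M` is PSD, then
`Tr (K * Xᵀ) ≤ ∑ √(eigenvalues M)`. -/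
lemma trace_le_of_con {n : Type*} [Fintype n] [DecidableEq n]
    {M : Matrix n n ℝ} (hM : M.PosSemidef) {K X : Matrix n n ℝ}
    (hK : Con Kᵀ) (hX : X * Xᵀ = M) :
    (K * Xᵀ).trace ≤ ∑ i, Real.sqrt (hM.1.eigenvalues i) := by
  set V := evU hM with hV
  have htr : ((Vᵀ * (K * Xᵀ)) * V).trace = (K * Xᵀ).trace := by
    rw [trace_mul_cycle, ← mul_assoc, evU_mul_t, one_mul]
  rw [← htr]
  rw [Matrix.trace]
  apply Finset.sum_le_sum
  intro i _
  -- bound the i-th diagonal entry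
  set u : n → ℝ := fun k => V k i with hu
  set w : n → ℝ := fun l => (Xᵀ * V) l i with hw
  have hentry : ((Vᵀ * (K * Xᵀ)) * V).diag i = u ⬝ᵥ (K *ᵥ w) := by
    have hassoc : (Vᵀ * (K * Xᵀ)) * V = Vᵀ * (K * (Xᵀ * V)) := by
      simp only [mul_assoc]
    rw [Matrix.diag, hassoc, mul_apply]
    simp only [dotProduct, mulVec, dotProduct, transpose_apply, hu, hw, mul_apply]
  have h1 : u ⬝ᵥ (K *ᵥ w) = (Kᵀ *ᵥ u) ⬝ᵥ w := by
    have h := mulVec_dot Kᵀ u w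
    rw [transpose_transpose] at h
    exact h.symm
  have h2 : (Kᵀ *ᵥ u) ⬝ᵥ w ≤
      Real.sqrt ((Kᵀ *ᵥ u) ⬝ᵥ (Kᵀ *ᵥ u)) * Real.sqrt (w ⬝ᵥ w) := dot_CS _ _
  have huu : u ⬝ᵥ u = 1 := by
    have h3 : u ⬝ᵥ u = (Vᵀ * V) i i := by
      simp [dotProduct, mul_apply, hu, transpose_apply]
    rw [h3, evU_t_mul]
    simp [one_apply]
  have hKu : (Kᵀ *ᵥ u) ⬝ᵥ (Kᵀ *ᵥ u) ≤ 1 := (hK u).trans_eq huu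
  have hww : w ⬝ᵥ w = hM.1.eigenvalues i := by
    have h3 : w ⬝ᵥ w = ((Xᵀ * V)ᵀ * (Xᵀ * V)) i i := by
      simp [dotProduct, mul_apply, hw, transpose_apply, mul_comm]
    rw [h3]
    have h4 : (Xᵀ * V)ᵀ * (Xᵀ * V) = Vᵀ * M * V := by
      rw [transpose_mul, transpose_transpose]
      calc Vᵀ * X * (Xᵀ * V) = Vᵀ * (X * Xᵀ) * V := by simp only [mul_assoc]
      _ = Vᵀ * M * V := by rw [hX]
    rw [h4, hV, conj_rev]
    simp [diagonal_apply_eq]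
  calc ((Vᵀ * (K * Xᵀ)) * V).diag i = (Kᵀ *ᵥ u) ⬝ᵥ w := by rw [hentry, h1]
  _ ≤ Real.sqrt ((Kᵀ *ᵥ u) ⬝ᵥ (Kᵀ *ᵥ u)) * Real.sqrt (w ⬝ᵥ w) := h2
  _ ≤ Real.sqrt 1 * Real.sqrt (hM.1.eigenvalues i) := by
      rw [hww]
      exact mul_le_mul_of_nonneg_right (Real.sqrt_le_sqrt hKu) (Real.sqrt_nonneg _)
  _ = Real.sqrt (hM.1.eigenvalues i) := by rw [Real.sqrt_one, one_mul]

section conj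

variable {n : Type*} [Fintype n] [DecidableEq n]

lemma conj_mul' {V : Matrix n n ℝ} (hV : Vᵀ * V = 1) (f g : n → ℝ) :
    (V * diagonal f * Vᵀ) * (V * diagonal g * Vᵀ) =
      V * diagonal (fun i => f i * g i) * Vᵀ := by
  have h : diagonal f * (Vᵀ * V) * diagonal g = diagonal (fun i => f i * g i) := by
    rw [hV, mul_one, diagonal_mul_diagonal]
  calc (V * diagonal f * Vᵀ) * (V * diagonal g * Vᵀ)
      = V * (diagonal f * (Vᵀ * V) * diagonal g) * Vᵀ := by simp only [mul_assoc]
  _ = V * diagonal (fun i => f i * g i) * Vᵀ := by rw [h]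

lemma conj_trace' {V : Matrix n n ℝ} (hV : Vᵀ * V = 1) (f : n → ℝ) :
    (V * diagonal f * Vᵀ).trace = ∑ i, f i := by
  rw [trace_mul_cycle, hV, one_mul, trace_diagonal]

lemma conj_transpose' (V : Matrix n n ℝ) (f : n → ℝ) :
    (V * diagonal f * Vᵀ)ᵀ = V * diagonal f * Vᵀ := by
  rw [transpose_mul, transpose_mul, transpose_transpose, diagonal_transpose, mul_assoc]

lemma conj_psd' (V : Matrix n n ℝ) (f : n → ℝ) (hf : ∀ i, 0 ≤ f i) :
    (V * diagonal f * Vᵀ).PosSemidef := by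
  have h1 : (diagonal f).PosSemidef := posSemidef_diagonal_iff.mpr hf
  have h2 := h1.mul_mul_conjTranspose_same V
  rwa [conjTranspose_eq_transpose_of_trivial] at h2

lemma conj_one' {V : Matrix n n ℝ} (hV : V * Vᵀ = 1) :
    (1 : Matrix n n ℝ) = V * diagonal (fun _ => (1:ℝ)) * Vᵀ := by
  rw [diagonal_one, mul_one, hV]

lemma conj_sub' (V : Matrix n n ℝ) (f g : n → ℝ) :
    (V * diagonal f * Vᵀ) - (V * diagonal g * Vᵀ) =
      V * diagonal (fun i => f i - g i) * Vᵀ := by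
  rw [← sub_mul, ← mul_sub, ← diagonal_sub]

end conj

section fwd

variable {n : Type*} [Fintype n] [DecidableEq n]

/-- Forward direction: construction of the optimal coupling `Z`. -/
lemma fwd {A C M : Matrix n n ℝ} (hAt : Aᵀ = A) (hCt : Cᵀ = C)
    (hMeq : A * (C * C) * A = M) (hM : M.PosSemidef) :
    ∃ Z : Matrix n n ℝ,
      (fromBlocks (A * A) Z Zᵀ (C * C)).PosSemidef ∧ Z.trace = hM.sqrt.trace := by
  subst hMeq
  obtain ⟨V, μ, hVt, hVm, hspec, hsqrt, hμ0⟩ :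
      ∃ (V : Matrix n n ℝ) (μ : n → ℝ),
        Vᵀ * V = 1 ∧ V * Vᵀ = 1 ∧
        A * (C * C) * A = V * diagonal μ * Vᵀ ∧
        hM.sqrt = V * diagonal (fun i => Real.sqrt (μ i)) * Vᵀ ∧
        ∀ i, 0 ≤ μ i :=
    ⟨evU hM, hM.1.eigenvalues, evU_t_mul hM, evU_mul_t hM, spectral hM, sqrt_eq hM,
      hM.eigenvalues_nonneg⟩
  set Pinv := V * diagonal (fun i => (Real.sqrt (μ i))⁻¹) * Vᵀ with hPinv
  set K := Pinv * (A * C) with hKdef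
  have hPt : Pinvᵀ = Pinv := by rw [hPinv]; exact conj_transpose' _ _
  have hXt : (A * C)ᵀ = C * A := by rw [transpose_mul, hAt, hCt]
  have hKKt : K * Kᵀ =
      V * diagonal (fun i => (Real.sqrt (μ i))⁻¹ * μ i * (Real.sqrt (μ i))⁻¹) * Vᵀ := by
    have h1 : K * Kᵀ = Pinv * (A * (C * C) * A) * Pinv := by
      rw [hKdef, transpose_mul, hPt, hXt]
      simp only [mul_assoc]
    rw [h1, hspec, hPinv, conj_mul' hVt, conj_mul' hVt]
  have hone : (1 : Matrix n n ℝ) - K * Kᵀ =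
      V * diagonal (fun i => 1 - (Real.sqrt (μ i))⁻¹ * μ i * (Real.sqrt (μ i))⁻¹) * Vᵀ := by
    rw [hKKt]
    conv_lhs => rw [conj_one' hVm]
    rw [conj_sub']
  have hpsd1 : ((1 : Matrix n n ℝ) - K * Kᵀ).PosSemidef := by
    rw [hone]
    exact conj_psd' V _ (fun i => sub_nonneg.mpr (sandwich_le_one (hμ0 i)))
  have hG : (A * ((1 : Matrix n n ℝ) - K * Kᵀ) * A).PosSemidef := by
    have h := hpsd1.mul_mul_conjTranspose_same A
    rwa [conjTranspose_eq_transpose_of_trivial, hAt] at h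
  have hGb : (fromBlocks (A * ((1 : Matrix n n ℝ) - K * Kᵀ) * A) 0 0
      (0 : Matrix n n ℝ)).PosSemidef := by
    have hsq : hG.sqrt * hG.sqrt = A * ((1 : Matrix n n ℝ) - K * Kᵀ) * A := hG.sqrt_mul_self
    have hsqt : (hG.sqrt)ᵀ = hG.sqrt := by
      have h : (hG.sqrt)ᴴ = hG.sqrt := hG.posSemidef_sqrt.1
      rwa [conjTranspose_eq_transpose_of_trivial] at h
    have hE := posSemidef_conjTranspose_mul_self (fromBlocks hG.sqrt 0 0 (0 : Matrix n n ℝ))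
    have heq : (fromBlocks hG.sqrt 0 0 (0 : Matrix n n ℝ))ᴴ *
        fromBlocks hG.sqrt 0 0 (0 : Matrix n n ℝ) =
        fromBlocks (A * ((1 : Matrix n n ℝ) - K * Kᵀ) * A) 0 0 0 := by
      rw [conjTranspose_eq_transpose_of_trivial, fromBlocks_transpose, fromBlocks_multiply]
      simp [hsqt, hsq]
    rwa [heq] at hE
  refine ⟨A * K * C, ?_, ?_⟩
  · have hpsd2 := posSemidef_conjTranspose_mul_self
      (fromBlocks 0 0 (Kᵀ * A) C : Matrix (n ⊕ n) (n ⊕ n) ℝ)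
    have hsum := hpsd2.add hGb
    have hfinal : (fromBlocks 0 0 (Kᵀ * A) C : Matrix (n ⊕ n) (n ⊕ n) ℝ)ᴴ *
        fromBlocks 0 0 (Kᵀ * A) C +
        fromBlocks (A * ((1 : Matrix n n ℝ) - K * Kᵀ) * A) 0 0 0 =
        fromBlocks (A * A) (A * K * C) ((A * K * C)ᵀ) (C * C) := by
      rw [conjTranspose_eq_transpose_of_trivial, fromBlocks_transpose, fromBlocks_multiply,
        fromBlocks_add, fromBlocks_inj]
      refine ⟨?_, ?_, ?_, ?_⟩
      · simp only [transpose_zero, transpose_mul, transpose_transpose, hAt, hCt]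
        noncomm_ring
      · simp only [transpose_zero, transpose_mul, transpose_transpose, hAt, hCt]
        noncomm_ring
      · simp only [transpose_zero, transpose_mul, transpose_transpose, hAt, hCt]
        noncomm_ring
      · simp only [transpose_zero, transpose_mul, transpose_transpose, hAt, hCt]
        noncomm_ring
    rwa [hfinal] at hsum
  · have h1 : A * K * C = A * (Pinv * (A * (C * C))) := by
      rw [hKdef]; noncomm_ring
    have h2 : (Pinv * (A * (C * C))) * A = Pinv * (A * (C * C) * A) := by
      simp only [mul_assoc]
    rw [hsqrt, conj_trace' hVt, h1, trace_mul_comm, h2, hspec, hPinv, conj_mul' hVt,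
      conj_trace' hVt]
    exact Finset.sum_congr rfl fun i _ => inv_sqrt_mul_self (hμ0 i)

end fwd

section bwd

variable {n : Type*} [Fintype n] [DecidableEq n]

lemma gram_block {R : Matrix (n ⊕ n) (n ⊕ n) ℝ} (hRt : Rᵀ = R)
    {P11 P12 P21 P22 : Matrix n n ℝ} (hRR : R * R = fromBlocks P11 P12 P21 P22) :
    (R.submatrix id Sum.inl)ᵀ * (R.submatrix id Sum.inl) = P11 ∧
    (R.submatrix id Sum.inl)ᵀ * (R.submatrix id Sum.inr) = P12 ∧
    (R.submatrix id Sum.inr)ᵀ * (R.submatrix id Sum.inr) = P22 := by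
  have key : ∀ a b : n ⊕ n, (∑ k, R k a * R k b) = (R * R) a b := by
    intro a b
    rw [mul_apply]
    apply Finset.sum_congr rfl
    intro k _
    have h1 : R k a = R a k := by
      calc R k a = Rᵀ a k := (transpose_apply R a k).symm
      _ = R a k := congrFun (congrFun hRt a) k
    rw [h1]
  refine ⟨?_, ?_, ?_⟩ <;> ext i j
  · rw [mul_apply]
    simp only [transpose_apply, submatrix_apply, id_eq]
    rw [key (Sum.inl i) (Sum.inl j), hRR, fromBlocks_apply₁₁]
  · rw [mul_apply]
    simp only [transpose_apply, submatrix_apply, id_eq]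
    rw [key (Sum.inl i) (Sum.inr j), hRR, fromBlocks_apply₁₂]
  · rw [mul_apply]
    simp only [transpose_apply, submatrix_apply, id_eq]
    rw [key (Sum.inr i) (Sum.inr j), hRR, fromBlocks_apply₂₂]

/-- Construction of a contraction `O` with `O * A = R1` from a Gram condition. -/
lemma contraction_factor {A : Matrix n n ℝ} (hA : A.PosSemidef)
    {R1 : Matrix (n ⊕ n) n ℝ} (h11 : R1ᵀ * R1 = A * A) :
    ∃ O : Matrix (n ⊕ n) n ℝ, O * A = R1 ∧ Con O := by
  obtain ⟨U, α, hUt, hUm, hAspec⟩ :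
      ∃ (U : Matrix n n ℝ) (α : n → ℝ),
        Uᵀ * U = 1 ∧ U * Uᵀ = 1 ∧ A = U * diagonal α * Uᵀ :=
    ⟨evU hA, hA.1.eigenvalues, evU_t_mul hA, evU_mul_t hA, spectral hA⟩
  set Ainv := U * diagonal (fun i => (α i)⁻¹) * Uᵀ with hAinv
  have hPi : Ainv * A = U * diagonal (fun i => (α i)⁻¹ * α i) * Uᵀ := by
    rw [hAinv, hAspec, conj_mul' hUt]
  have hAit : Ainvᵀ = Ainv := by rw [hAinv]; exact conj_transpose' _ _
  have hzero : (A * A) * ((1 : Matrix n n ℝ) - Ainv * A) = 0 := by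
    rw [hPi, hAspec, conj_mul' hUt]
    conv_lhs => rw [conj_one' hUm]
    rw [conj_sub', conj_mul' hUt]
    have hz : (fun i => (α i * α i) * ((1:ℝ) - (α i)⁻¹ * α i)) = fun _ => (0:ℝ) := by
      funext i
      rcases eq_or_ne (α i) 0 with h | h
      · simp [h]
      · have hinv : (α i)⁻¹ * α i = 1 := inv_mul_cancel₀ h
        rw [hinv]; simp
    rw [hz, diagonal_zero, mul_zero, zero_mul]
  have hPit : ((1 : Matrix n n ℝ) - Ainv * A)ᵀ = 1 - Ainv * A := by
    rw [hPi, transpose_sub, transpose_one, conj_transpose']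
  have hN : (R1 * ((1 : Matrix n n ℝ) - Ainv * A))ᴴ *
      (R1 * ((1 : Matrix n n ℝ) - Ainv * A)) = 0 := by
    rw [conjTranspose_eq_transpose_of_trivial, transpose_mul, hPit]
    calc ((1 : Matrix n n ℝ) - Ainv * A) * R1ᵀ * (R1 * ((1 : Matrix n n ℝ) - Ainv * A))
        = ((1 : Matrix n n ℝ) - Ainv * A) * (R1ᵀ * R1) * ((1 : Matrix n n ℝ) - Ainv * A) := by
          simp only [Matrix.mul_assoc]
    _ = ((1 : Matrix n n ℝ) - Ainv * A) * ((A * A) * ((1 : Matrix n n ℝ) - Ainv * A)) := by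
          rw [h11]; simp only [Matrix.mul_assoc]
    _ = 0 := by rw [hzero, mul_zero]
  have hz2 : R1 * ((1 : Matrix n n ℝ) - Ainv * A) = 0 := conjTranspose_mul_self_eq_zero.mp hN
  have hproj : R1 * (Ainv * A) = R1 := by
    have h3 : R1 - R1 * (Ainv * A) = 0 := by
      rw [← hz2, Matrix.mul_sub, Matrix.mul_one]
    have h4 := sub_eq_zero.mp h3
    exact h4.symm
  refine ⟨R1 * Ainv, by rw [Matrix.mul_assoc]; exact hproj, ?_⟩
  apply con_of_one_sub_psd
  have hOtO : (R1 * Ainv)ᵀ * (R1 * Ainv) =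
      U * diagonal (fun i => (α i)⁻¹ * (α i * α i) * (α i)⁻¹) * Uᵀ := by
    rw [transpose_mul, hAit]
    calc Ainv * R1ᵀ * (R1 * Ainv) = Ainv * (R1ᵀ * R1) * Ainv := by simp only [Matrix.mul_assoc]
    _ = Ainv * (A * A) * Ainv := by rw [h11]
    _ = U * diagonal (fun i => (α i)⁻¹ * (α i * α i) * (α i)⁻¹) * Uᵀ := by
        rw [hAinv, hAspec, conj_mul' hUt, conj_mul' hUt, conj_mul' hUt]
  rw [hOtO]
  nth_rewrite 1 [conj_one' hUm]
  rw [conj_sub']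
  apply conj_psd'
  intro i
  apply sub_nonneg.mpr
  rcases eq_or_ne (α i) 0 with h | h
  · simp [h]
  · have he : (α i)⁻¹ * (α i * α i) * (α i)⁻¹ = 1 := by
      field_simp
    rw [he]

/-- Backward direction: the trace bound. -/
lemma bwd {A C M : Matrix n n ℝ} (hA : A.PosSemidef) (hC : C.PosSemidef)
    (hMeq : A * (C * C) * A = M) (hM : M.PosSemidef)
    {Z : Matrix n n ℝ} (hP : (fromBlocks (A * A) Z Zᵀ (C * C)).PosSemidef) :
    Z.trace ≤ hM.sqrt.trace := by
  have hAt : Aᵀ = A := by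
    have h : Aᴴ = A := hA.1
    rwa [conjTranspose_eq_transpose_of_trivial] at h
  have hCt : Cᵀ = C := by
    have h : Cᴴ = C := hC.1
    rwa [conjTranspose_eq_transpose_of_trivial] at h
  have hRR : hP.sqrt * hP.sqrt = fromBlocks (A * A) Z Zᵀ (C * C) := hP.sqrt_mul_self
  have hRt : (hP.sqrt)ᵀ = hP.sqrt := by
    have h : (hP.sqrt)ᴴ = hP.sqrt := hP.posSemidef_sqrt.1
    rwa [conjTranspose_eq_transpose_of_trivial] at h
  obtain ⟨h11, h12, h22⟩ := gram_block hRt hRR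
  obtain ⟨O1, hO1A, hConO1⟩ := contraction_factor hA h11
  obtain ⟨O2, hO2C, hConO2⟩ := contraction_factor hC h22
  have hZfac : Z = A * (O1ᵀ * O2) * C := by
    rw [← h12, ← hO1A, ← hO2C, transpose_mul, hAt]
    simp only [Matrix.mul_assoc]
  have hXXt : (A * C) * (A * C)ᵀ = M := by
    rw [transpose_mul, hAt, hCt, ← hMeq]
    simp only [Matrix.mul_assoc]
  have hcon : Con ((O1ᵀ * O2)ᵀ) := by
    rw [transpose_mul, transpose_transpose]
    exact hConO2.transpose.comp hConO1
  have htr : Z.trace = ((O1ᵀ * O2) * (A * C)ᵀ).trace := by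
    rw [hZfac, transpose_mul, hAt, hCt, trace_mul_cycle, trace_mul_comm]
  rw [htr, trace_sqrt hM]
  exact trace_le_of_con hM hcon hXXt

end bwd

end BuresAux

open BuresAux in
/-- **SDP representation of the Bures constraint.** For PSD matrices `Σ, Σ̂`,
`Tr(Σ + Σ̂ - 2 (Σ̂^{1/2} Σ Σ̂^{1/2})^{1/2}) ≤ θ²` holds iff there exists `Z` with
`[[Σ̂, Z], [Zᵀ, Σ]] ⪰ 0` and `Tr(Σ + Σ̂ - 2 Z) ≤ θ²`. -/
theorem bures_constraint_sdp_iff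
    {d : ℕ} {S Shat : Matrix (Fin d) (Fin d) ℝ}
    (hS : S.PosSemidef) (hShat : Shat.PosSemidef)
    (hM : (hShat.sqrt * S * hShat.sqrt).PosSemidef) (θ : ℝ) :
    (S + Shat - (2 : ℝ) • hM.sqrt).trace ≤ θ ^ 2 ↔
      ∃ Z : Matrix (Fin d) (Fin d) ℝ,
        (fromBlocks Shat Z Zᵀ S).PosSemidef ∧ (S + Shat - 2 • Z).trace ≤ θ ^ 2 := by
  have hAt : (hShat.sqrt)ᵀ = hShat.sqrt := by
    have h : (hShat.sqrt)ᴴ = hShat.sqrt := hShat.posSemidef_sqrt.1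
    rwa [conjTranspose_eq_transpose_of_trivial] at h
  have hCt : (hS.sqrt)ᵀ = hS.sqrt := by
    have h : (hS.sqrt)ᴴ = hS.sqrt := hS.posSemidef_sqrt.1
    rwa [conjTranspose_eq_transpose_of_trivial] at h
  have hMeq : hShat.sqrt * (hS.sqrt * hS.sqrt) * hShat.sqrt = hShat.sqrt * S * hShat.sqrt := by
    rw [hS.sqrt_mul_self]
  have ea : (S + Shat - (2 : ℝ) • hM.sqrt).trace
      = S.trace + Shat.trace - 2 * hM.sqrt.trace := by
    rw [trace_sub, trace_add, trace_smul, smul_eq_mul]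
  constructor
  · intro hle
    obtain ⟨Z, hpsd, htr⟩ := fwd hAt hCt hMeq hM
    rw [hShat.sqrt_mul_self, hS.sqrt_mul_self] at hpsd
    refine ⟨Z, hpsd, ?_⟩
    have eb : (S + Shat - 2 • Z).trace = S.trace + Shat.trace - 2 * Z.trace := by
      rw [trace_sub, trace_add, trace_smul]
      norm_num
    rw [eb, htr]
    rw [ea] at hle
    linarith
  · rintro ⟨Z, hpsd, hle⟩
    have hpsd' : (fromBlocks (hShat.sqrt * hShat.sqrt) Z Zᵀ (hS.sqrt * hS.sqrt)).PosSemidef := by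
      rwa [hShat.sqrt_mul_self, hS.sqrt_mul_self]
    have hble := bwd hShat.posSemidef_sqrt hS.posSemidef_sqrt hMeq hM hpsd'
    have eb : (S + Shat - 2 • Z).trace = S.trace + Shat.trace - 2 * Z.trace := by
      rw [trace_sub, trace_add, trace_smul]
      norm_num
    rw [ea]
    rw [eb] at hle
    linarith
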